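/- For integers k ≥ 2 and d ≥ 2, there exist two disjoint lattice polytopes P and Q contained in [0,k]^d with d(P,Q) ≤ 1/((d−1)k). Concretely, taking P = {(1,1,…,1)} and Q the simplex with vertices the origin and the d−1 points obtained from (k,…,k) by decreasing one of the first d−1 coordinates to k−1 (and setting the last coordinate to k), P and Q are disjoint and d(P,Q) ≤ 1/((d−1)k). -/

import Mathlib

/-- For integers k ≥ 2 and d ≥ 2, the point P = {(1,…,1)} and the
simplex Q spanned by the origin together with the d-1 points obtained from (k,…,k)
by decreasing one of the first d-1 coordinates to k-1, are disjoint lattice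
polytopes in [0,k]^d with d(P,Q) ≤ 1/((d-1)k). -/


private lemma sum_ite_fin {d : ℕ} (a : Fin d) (x y : ℝ) :
    ∑ i : Fin d, (if i = a then x else y) = x + ((d:ℝ) - 1) * y := by
  have h : ∀ i : Fin d, (if i = a then x else y) = y + (if i = a then x - y else 0) := by
    intro i; split <;> ring
  simp_rw [h, Finset.sum_add_distrib, Finset.sum_const, Finset.sum_ite_eq' Finset.univ a (fun _ => x - y)]
  simp
  ring


theorem stmt_5 (d k : ℕ) (hd : 2 ≤ d) (hk : 2 ≤ k) :
    let P : Set (EuclideanSpace ℝ (Fin d)) := {WithLp.toLp 2 (fun _ => (1 : ℝ))}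
    let Q : Set (EuclideanSpace ℝ (Fin d)) :=
      convexHull ℝ ({0} ∪
        {x | ∃ i : Fin d, (i : ℕ) < d - 1 ∧
          x = WithLp.toLp 2 (fun j : Fin d => if j = i then (k : ℝ) - 1 else (k : ℝ))})
    P ∩ Q = ∅ ∧ sInf (Set.image2 dist P Q) ≤ 1 / (((d : ℝ) - 1) * k) := by
  intro P Q
  set S : Set (EuclideanSpace ℝ (Fin d)) := ({0} ∪
        {x | ∃ i : Fin d, (i : ℕ) < d - 1 ∧
          x = WithLp.toLp 2 (fun j : Fin d => if j = i then (k : ℝ) - 1 else (k : ℝ))}) with hS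
  set K : ℝ := (k : ℝ) with hKdef
  set D : ℝ := (d : ℝ) - 1 with hDdef
  have hK : (2:ℝ) ≤ K := by rw [hKdef]; exact_mod_cast hk
  have hD : (1:ℝ) ≤ D := by
    have : (2:ℝ) ≤ (d:ℝ) := by exact_mod_cast hd
    simp [hDdef]; linarith
  have hdpos : 0 < d := by omega
  have hd1lt : d - 1 < d := by omega
  set last : Fin d := ⟨d - 1, hd1lt⟩ with hlast
  have hlt_iff : ∀ i : Fin d, ((i : ℕ) < d - 1) ↔ i ≠ last := by
    intro i
    have h1 : (i : ℕ) < d := i.isLt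
    constructor
    · intro h he; rw [he] at h; simp [hlast] at h
    · intro h
      have : (i : ℕ) ≠ d - 1 := fun he => h (Fin.ext he)
      omega
  -- the normal functional for disjointness
  set n : Fin d → ℝ := fun j => if j = last then 1 - D * K else K with hn
  set H : Set (EuclideanSpace ℝ (Fin d)) := {x | ∑ j, n j * x j = 0} with hH
  have hconv : Convex ℝ H := by
    intro x hx y hy a b ha hb hab
    simp only [hH, Set.mem_setOf_eq] at hx hy ⊢
    have hpt : ∀ j : Fin d, n j * (a • x + b • y) j = a * (n j * x j) + b * (n j * y j) := by
      intro j
      have : (a • x + b • y) j = a * x j + b * y j := by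
        simp [PiLp.add_apply, PiLp.smul_apply, smul_eq_mul]
      rw [this]; ring
    rw [Finset.sum_congr rfl (fun j _ => hpt j), Finset.sum_add_distrib,
      ← Finset.mul_sum, ← Finset.mul_sum, hx, hy]
    ring
  have hSH : S ⊆ H := by
    rintro x (rfl | ⟨i, hi, rfl⟩)
    · simp only [hH, Set.mem_setOf_eq]
      simp
    · simp only [hH, Set.mem_setOf_eq]
      have hine : i ≠ last := (hlt_iff i).1 hi
      have hpt : ∀ j : Fin d, n j * (if j = i then K - 1 else K)
          = K * n j - (if j = i then n j else 0) := by
        intro j; split <;> ring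
      rw [Finset.sum_congr rfl (fun j _ => hpt j), Finset.sum_sub_distrib,
        ← Finset.mul_sum, Finset.sum_ite_eq' Finset.univ i n]
      have hsum : ∑ j, n j = 1 := by
        rw [hn, sum_ite_fin last (1 - D*K) K]; rw [hDdef]; ring
      simp only [hsum]; simp [hn, if_neg hine]
  have hQH : Q ⊆ H := convexHull_min hSH hconv
  have honeH : (WithLp.toLp 2 (fun _ => (1:ℝ)) : EuclideanSpace ℝ (Fin d)) ∉ H := by
    intro hmem
    simp only [hH, Set.mem_setOf_eq] at hmem
    have hsum : ∑ j, n j * (WithLp.toLp 2 (fun _ => (1:ℝ)) : EuclideanSpace ℝ (Fin d)) j = 1 := by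
      simp only [mul_one]
      rw [hn, sum_ite_fin last (1 - D*K) K]; rw [hDdef]; ring
    rw [hmem] at hsum
    norm_num at hsum
  refine ⟨?_, ?_⟩
  · ext x
    simp only [Set.mem_inter_iff, Set.mem_empty_iff_false, iff_false, not_and]
    rintro rfl
    exact fun hx => honeH (hQH hx)
  · -- distance bound
    have hD0 : (0:ℝ) < D := by linarith
    have hK0 : (0:ℝ) < K := by linarith
    set N : ℝ := D^2*K^2 + D*K^2 - 2*D*K + 1 with hNdef
    have hDK2 : (2:ℝ) ≤ D*K := by nlinarith
    have hNpos : 0 < N := by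
      rw [hNdef]
      nlinarith [mul_nonneg (mul_pos hD0 hK0).le (by linarith : (0:ℝ) ≤ D*K - 2),
        mul_pos (mul_pos hD0 hK0) hK0]
    set A : ℝ := (D*K + K - 1)/N with hAdef
    have hApos : 0 < A := by
      rw [hAdef]; apply div_pos (by nlinarith) hNpos
    set B : ℝ := 1 - D * A with hBdef
    have hBnn : 0 ≤ B := by
      have hB' : B = (N - D*(D*K+K-1))/N := by
        rw [hBdef, hAdef]; field_simp
      rw [hB']
      apply div_nonneg _ hNpos.le
      rw [hNdef]; nlinarith
    set p : Fin d → EuclideanSpace ℝ (Fin d) := fun i =>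
      if _ : (i:ℕ) < d - 1 then WithLp.toLp 2 (fun j => if j = i then K - 1 else K) else 0 with hp
    set w : Fin d → ℝ := fun i => if (i:ℕ) < d - 1 then A else B with hw
    have hw0 : ∀ i ∈ Finset.univ, 0 ≤ w i := by
      intro i _; rw [hw]; dsimp only; split
      · exact hApos.le
      · exact hBnn
    have hwsum : ∑ i, w i = 1 := by
      have hwi : ∀ i : Fin d, w i = if i = last then B else A := by
        intro i; rw [hw]; dsimp only
        rcases eq_or_ne i last with h | h
        · rw [if_pos h, if_neg (by rw [hlt_iff]; simp [h])]
        · rw [if_neg h, if_pos ((hlt_iff i).2 h)]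
      rw [Finset.sum_congr rfl (fun i _ => hwi i), sum_ite_fin last B A, ← hDdef, hBdef]
      ring
    have hpS : ∀ i ∈ Finset.univ, p i ∈ S := by
      intro i _
      rw [hp]; dsimp only
      split
      · next h => exact Or.inr ⟨i, h, rfl⟩
      · exact Or.inl rfl
    set q : EuclideanSpace ℝ (Fin d) :=
      WithLp.toLp 2 (fun j => A * (D*K - if j = last then 0 else 1)) with hq
    have hsum1 : ∑ i : Fin d, (if i = last then (0:ℝ) else K) = D*K := by
      rw [sum_ite_fin last 0 K, ← hDdef]; ring
    have hsum2 : ∀ j : Fin d, ∑ i : Fin d, (if j = i ∧ i ≠ last then (1:ℝ) else 0)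
        = if j = last then 0 else 1 := by
      intro j
      rcases eq_or_ne j last with hj | hj
      · rw [if_pos hj]
        apply Finset.sum_eq_zero
        intro i _
        rw [if_neg]
        rintro ⟨h1, h2⟩
        exact h2 (by rw [← h1]; exact hj)
      · rw [if_neg hj]
        have h3 : ∀ i : Fin d, (if j = i ∧ i ≠ last then (1:ℝ) else 0)
            = if j = i then 1 else 0 := by
          intro i
          by_cases h : j = i
          · have : i ≠ last := by rw [← h]; exact hj
            simp [h, this]
          · simp [h]
        rw [Finset.sum_congr rfl (fun i _ => h3 i),
          Finset.sum_ite_eq Finset.univ j (fun _ => (1:ℝ))]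
        simp
    have key : ∑ i, w i • p i = q := by
      ext j
      rw [WithLp.ofLp_sum, Finset.sum_apply j Finset.univ (fun i => (w i • p i).ofLp)]
      have hterm : ∀ i : Fin d, (w i • p i) j
          = A * ((if i = last then 0 else K) - (if j = i ∧ i ≠ last then 1 else 0)) := by
        intro i
        have hsm : (w i • p i) j = w i * p i j := rfl
        rw [hsm, hw, hp]; dsimp only
        rcases lt_or_ge (i:ℕ) (d-1) with h | h
        · have hne : i ≠ last := (hlt_iff i).1 h
          rw [if_pos h, dif_pos h, if_neg hne]
          simp only [WithLp.ofLp_toLp]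
          by_cases hji : j = i
          · rw [if_pos hji, if_pos ⟨hji, hne⟩]
          · rw [if_neg hji, if_neg (fun hh => hji hh.1)]; ring
        · have heq : i = last := by
            by_contra hc
            exact absurd ((hlt_iff i).2 hc) (not_lt.2 h)
          rw [dif_neg (not_lt.2 h), if_neg (not_lt.2 h), if_pos heq,
            if_neg (fun hh => hh.2 heq)]
          have h0 : (0 : EuclideanSpace ℝ (Fin d)) j = 0 := rfl
          rw [h0]; ring
      rw [Finset.sum_congr rfl (fun i _ => hterm i), ← Finset.mul_sum,
        Finset.sum_sub_distrib, hsum1, hsum2 j]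
    have hqQ : q ∈ Q := by
      have hm := Finset.centerMass_mem_convexHull (Finset.univ) hw0
        (by rw [hwsum]; norm_num) hpS
      rw [Finset.centerMass_eq_of_sum_1 _ _ hwsum, key] at hm
      exact hm
    have honeP : (WithLp.toLp 2 (fun _ => (1:ℝ)) : EuclideanSpace ℝ (Fin d)) ∈ P := rfl
    refine le_trans (csInf_le ⟨0, ?_⟩ (Set.mem_image2_of_mem honeP hqQ)) ?_
    · rintro x ⟨a, ha, b, hb, rfl⟩
      exact dist_nonneg
    · rw [EuclideanSpace.dist_eq]
      have h1 : ∀ j : Fin d, dist ((WithLp.toLp 2 (fun _ => (1:ℝ)) : EuclideanSpace ℝ (Fin d)) j) (q j) ^ 2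
          = if j = last then (1 - A*(D*K))^2 else (1 - A*(D*K-1))^2 := by
        intro j
        rw [Real.dist_eq, sq_abs, hq]; dsimp only
        split <;> ring
      rw [Finset.sum_congr rfl (fun j _ => h1 j)]
      rw [sum_ite_fin last ((1 - A*(D*K))^2) ((1 - A*(D*K-1))^2), ← hDdef]
      have hval : (1 - A*(D*K))^2 + D*(1 - A*(D*K-1))^2 = 1/N := by
        have hN0 : N ≠ 0 := hNpos.ne'
        rw [hAdef]
        field_simp
        rw [hNdef]
        ring
      rw [hval]
      have hle : 1/N ≤ (1/(D*K))^2 := by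
        rw [div_pow, one_pow]
        apply one_div_le_one_div_of_le (by positivity)
        rw [hNdef]; nlinarith
      calc Real.sqrt (1/N) ≤ Real.sqrt ((1/(D*K))^2) := Real.sqrt_le_sqrt hle
        _ = 1/(D*K) := Real.sqrt_sq (by positivity)
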